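/- Let N be an L-structure, A a subset of N, and f : A → N a partial elementary map, i.e., for every L-formula φ(x₁,...,xₙ) and all a₁,...,aₙ ∈ A, N ⊨ φ(a₁,...,aₙ) if and only if N ⊨ φ(f(a₁),...,f(aₙ)). Then there exist an elementary extension N' of N and an L-automorphism τ of N' such that τ(a) = f(a) for every a ∈ A. -/

import Mathlib

universe u v w

open FirstOrder Language Structure

namespace Stmt9Aux

variable {L : FirstOrder.Language.{u, v}}

section Congr

variable {M : Type*} [L.Structure M]

lemma realize_congr_freeVar {α : Type*} [DecidableEq α] (φ : L.Formula α) {v₁ v₂ : α → M}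
    (h : ∀ a ∈ φ.freeVarFinset, v₁ a = v₂ a) : φ.Realize v₁ ↔ φ.Realize v₂ := by
  have h₁ := BoundedFormula.realize_restrictFreeVar' (L := L) (M := M) (φ := φ)
    (s := (↑φ.freeVarFinset : Set α)) subset_rfl (v := v₁) (xs := default)
  have h₂ := BoundedFormula.realize_restrictFreeVar' (L := L) (M := M) (φ := φ)
    (s := (↑φ.freeVarFinset : Set α)) subset_rfl (v := v₂) (xs := default)
  have hv : v₁ ∘ (Subtype.val : (↑φ.freeVarFinset : Set α) → α)
      = v₂ ∘ (Subtype.val : (↑φ.freeVarFinset : Set α) → α) := by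
    funext a
    exact h a.1 (by exact_mod_cast a.2)
  show BoundedFormula.Realize φ v₁ default ↔ BoundedFormula.Realize φ v₂ default
  rw [← h₁, ← h₂, hv]

lemma realize_foldr_inf {α : Type*} (l : List (L.Formula α)) (v : α → M) :
    (l.foldr (· ⊓ ·) ⊤).Realize v ↔ ∀ ξ ∈ l, ξ.Realize v := by
  induction l with
  | nil => simp [Formula.Realize]
  | cons head tail ih =>
    simp only [List.foldr, Formula.realize_inf, ih, List.mem_cons]
    constructor
    · rintro ⟨h1, h2⟩ ξ (rfl | hξ)
      · exact h1
      · exact h2 ξ hξ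
    · intro hh
      exact ⟨hh _ (Or.inl rfl), fun ξ hξ => hh ξ (Or.inr hξ)⟩

end Congr

section Extend

variable {M : Type (max u v w)} [L.Structure M] [Nonempty M]

/-- Given a partial elementary map `h : B → M` and a formula realized by the identity
valuation, we can find a total valuation agreeing with `h` on a finite subset of `B`
realizing the formula. -/
lemma exists_valuation_extend (B : Set M) (h : B → M)
    (hel : ∀ (n : ℕ) (φ : L.Formula (Fin n)) (x : Fin n → B),
      φ.Realize (fun i => (x i : M)) ↔ φ.Realize (fun i => h (x i)))
    (φ : L.Formula M) (hφ : φ.Realize (id : M → M))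
    (B₀ : Finset M) (hB₀ : ↑B₀ ⊆ B) :
    ∃ η : M → M, (∀ b (hb : b ∈ B₀), η b = h ⟨b, hB₀ hb⟩) ∧ φ.Realize η := by
  classical
  set n := B₀.card with hn
  set e : ↥B₀ ≃ Fin n := B₀.equivFin with he
  set r : M → Fin n ⊕ Option ↥(φ.freeVarFinset \ B₀) := fun q =>
    if hq : q ∈ B₀ then Sum.inl (e ⟨q, hq⟩)
    else if hq' : q ∈ φ.freeVarFinset \ B₀ then Sum.inr (some ⟨q, hq'⟩)
    else Sum.inr none with hr
  set ψ : L.Formula (Fin n) := (φ.relabel r).iExs (Option ↥(φ.freeVarFinset \ B₀)) with hψ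
  set x : Fin n → B := fun j => ⟨(e.symm j : M), hB₀ (e.symm j).2⟩ with hx
  have key := hel n ψ x
  have lhs : ψ.Realize (fun i => (x i : M)) := by
    rw [hψ, Formula.realize_iExs]
    refine ⟨fun g => Option.elim g (Classical.arbitrary M) (fun s => (s : M)), ?_⟩
    rw [Formula.realize_relabel]
    rw [realize_congr_freeVar (v₂ := (id : M → M)) φ ?_]
    · exact hφ
    · intro a ha
      by_cases hq : a ∈ B₀
      · simp [hr, hq, hx]
      · have hq' : a ∈ φ.freeVarFinset \ B₀ := Finset.mem_sdiff.2 ⟨ha, hq⟩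
        simp [hr, hq, hq', ha]
  rw [key, hψ, Formula.realize_iExs] at lhs
  simp only [Formula.realize_relabel] at lhs
  obtain ⟨i, hi⟩ := lhs
  refine ⟨fun a => Sum.elim (fun j => h (x j)) i (r a), ?_, hi⟩
  intro b hb
  have hrb : r b = Sum.inl (e ⟨b, hb⟩) := by simp [hr, hb]
  show Sum.elim (fun j => h (x j)) i (r b) = h ⟨b, hB₀ hb⟩
  rw [hrb]
  simp only [Sum.elim_inl]
  congr 1
  rw [hx]
  apply Subtype.ext
  simp

end Extend


section CEL

variable {L : FirstOrder.Language.{u, v}}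

/-- The `L[[Q]]`-structure on `Q` where second-copy constants are interpreted by `η`. -/
def Seta' (L : FirstOrder.Language.{u, v}) (Q : Type (max u v w)) [L.Structure Q] (η : Q → Q) :
    (L[[Q]]).Structure Q :=
  @Language.sumStructure L (constantsOn Q) Q _ (constantsOn.structure η)

/-- The `(L[[Q]])[[Q]]`-structure on `Q`: first-copy constants are themselves, second-copy
constants are interpreted by `η`. -/
def SQ2' (L : FirstOrder.Language.{u, v}) (Q : Type (max u v w)) [L.Structure Q] (η : Q → Q) :
    ((L[[Q]])[[Q]]).Structure Q :=
  @Language.sumStructure (L[[Q]]) (constantsOn Q) Q _ (constantsOn.structure η)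

/-- The one-step extension lemma: a partial elementary self-map of `Q` extends to a
total elementary embedding into a single elementary extension of `Q`. -/
lemma step_lemma (Q : Type (max u v w)) [L.Structure Q] [Nonempty Q]
    (B : Set Q) (h : B → Q)
    (hel : ∀ (n : ℕ) (φ : L.Formula (Fin n)) (x : Fin n → B),
      φ.Realize (fun i => (x i : Q)) ↔ φ.Realize (fun i => h (x i))) :
    ∃ (R : Type (max u v w)) (_ : L.Structure R) (i : Q ↪ₑ[L] R) (σ : Q ↪ₑ[L] R),
      Nonempty R ∧ ∀ b : B, σ b = i (h b) := by
  classical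
  -- the language with two copies of constants for `Q`
  let L2 : FirstOrder.Language := (L[[Q]])[[Q]]
  let ρ₁ : L[[Q]] →ᴸ L2 := LHom.sumInl
  let ρ₂ : L[[Q]] →ᴸ L2 := LHom.sumMap (LHom.sumInl) (LHom.id (constantsOn Q))
  let c₁ : Q → L2.Constants := fun q => Sum.inl (L.con q)
  let c₂ : Q → L2.Constants := fun q => (L[[Q]]).con q
  let linkSent : B → L2.Sentence := fun b =>
    Term.equal (Constants.term (c₂ b)) (Constants.term (c₁ (h b)))
  let T : L2.Theory := ρ₁.onTheory (L.elementaryDiagram Q) ∪ ρ₂.onTheory (L.elementaryDiagram Q)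
      ∪ Set.range linkSent
  have Tsat : T.IsSatisfiable := by
    rw [Theory.isSatisfiable_iff_isFinitelySatisfiable]
    intro T₀ hT₀
    -- the link sentences appearing in T₀
    let K : Finset L2.Sentence := T₀.filter (· ∈ Set.range linkSent)
    have pbs : ∀ χ : {χ // χ ∈ K}, ∃ b : B, linkSent b = (χ : L2.Sentence) := by
      rintro ⟨χ, hχ⟩
      exact (Finset.mem_filter.1 hχ).2
    let pb : {χ // χ ∈ K} → B := fun χ => Classical.choose (pbs χ)
    have pb_spec : ∀ χ : {χ // χ ∈ K}, linkSent (pb χ) = (χ : L2.Sentence) :=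
      fun χ => Classical.choose_spec (pbs χ)
    let B₀ : Finset Q := Finset.image (fun χ => ((pb χ : B) : Q)) K.attach
    have hB₀ : ↑B₀ ⊆ B := by
      intro q hq
      simp only [B₀, Finset.coe_image, Set.mem_image] at hq
      obtain ⟨χ, _, rfl⟩ := hq
      exact (pb χ).2
    -- the second-copy elementary diagram sentences appearing in T₀
    let D : Finset L2.Sentence := T₀.filter (· ∈ ρ₂.onTheory (L.elementaryDiagram Q))
    have psis : ∀ χ : {χ // χ ∈ D}, ∃ ψ ∈ L.elementaryDiagram Q,
        ρ₂.onSentence ψ = (χ : L2.Sentence) := by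
      rintro ⟨χ, hχ⟩
      exact (Finset.mem_filter.1 hχ).2
    let psi : {χ // χ ∈ D} → L[[Q]].Sentence := fun χ => Classical.choose (psis χ)
    have psi_diag : ∀ χ, psi χ ∈ L.elementaryDiagram Q :=
      fun χ => (Classical.choose_spec (psis χ)).1
    have psi_spec : ∀ χ, ρ₂.onSentence (psi χ) = (χ : L2.Sentence) :=
      fun χ => (Classical.choose_spec (psis χ)).2
    let phis : List (L.Formula Q) := D.attach.toList.map
      (fun χ => Formula.equivSentence.symm (psi χ))
    let bigφ : L.Formula Q := phis.foldr (· ⊓ ·) ⊤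
    have bigφ_realize : ∀ (v : Q → Q), bigφ.Realize v ↔ ∀ ξ ∈ phis, ξ.Realize v :=
      fun v => realize_foldr_inf phis v
    have hφid : bigφ.Realize (id : Q → Q) := by
      rw [bigφ_realize]
      intro ξ hξ
      simp only [phis, List.mem_map] at hξ
      obtain ⟨χ, _, rfl⟩ := hξ
      have hQψ : Q ⊨ psi χ := mem_completeTheory.1 (psi_diag χ)
      exact (Formula.realize_equivSentence_symm (M := Q) (psi χ) (id : Q → Q)).2 hQψ
    obtain ⟨η, hη, hηφ⟩ := exists_valuation_extend (L := L) B h hel bigφ hφid B₀ hB₀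
    -- build the expanded structure on `Q` itself
    have exp1 : @LHom.IsExpansionOn _ _ ρ₁ Q (inferInstanceAs (L[[Q]].Structure Q))
        (SQ2' L Q η) :=
      @LHom.IsExpansionOn.mk _ _ _ Q (inferInstance : L[[Q]].Structure Q) (SQ2' L Q η)
        (fun _ _ => rfl) (fun _ _ => rfl)
    have exp2 : @LHom.IsExpansionOn _ _ ρ₂ Q (Seta' L Q η) (SQ2' L Q η) :=
      @LHom.IsExpansionOn.mk _ _ _ Q (Seta' L Q η) (SQ2' L Q η)
        (fun f x => by rcases f with f | c <;> rfl) (fun R x => by rcases R with R | R <;> rfl)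
    have model : @Theory.Model L2 Q (SQ2' L Q η) (T₀ : L2.Theory) := by
      refine @Theory.Model.mk L2 Q (SQ2' L Q η) (T₀ : L2.Theory) ?_
      intro χ hχ
      rcases hT₀ hχ with (h1 | h2) | h3
      · obtain ⟨ψ, hψ, rfl⟩ := h1
        exact (@LHom.realize_onSentence _ _ Q (inferInstanceAs (L[[Q]].Structure Q)) (SQ2' L Q η)
          ρ₁ exp1 ψ).2 ((mem_completeTheory (L := L[[Q]]) (M := Q)).1 hψ)
      · have hχD : χ ∈ D := Finset.mem_filter.2 ⟨hχ, h2⟩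
        set χ' : {χ // χ ∈ D} := ⟨χ, hχD⟩ with hχ'
        have hspec : ρ₂.onSentence (psi χ') = χ := psi_spec χ'
        rw [← hspec]
        refine (@LHom.realize_onSentence _ _ Q (Seta' L Q η) (SQ2' L Q η) ρ₂ exp2 (psi χ')).2 ?_
        refine (Formula.realize_equivSentence_symm (M := Q) (psi χ') η).1 ?_
        rw [bigφ_realize] at hηφ
        refine hηφ _ ?_
        simp only [phis, List.mem_map]
        exact ⟨χ', by simp, rfl⟩
      · have hχK : χ ∈ K := Finset.mem_filter.2 ⟨hχ, h3⟩
        set χ' : {χ // χ ∈ K} := ⟨χ, hχK⟩ with hχ'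
        have hspec : linkSent (pb χ') = χ := pb_spec χ'
        rw [← hspec]
        have hmem : ((pb χ' : B) : Q) ∈ B₀ :=
          Finset.mem_image.2 ⟨χ', Finset.mem_attach _ _, rfl⟩
        have hηb := hη _ hmem
        have heq : η ((pb χ' : B) : Q) = h (pb χ') := by rw [hηb]
        letI : ((L[[Q]])[[Q]]).Structure Q := SQ2' L Q η
        refine Formula.realize_equal.2 ?_
        show η ((pb χ' : B) : Q) = h (pb χ')
        exact heq
    exact @Theory.Model.isSatisfiable L2 (T₀ : L2.Theory) Q _ (SQ2' L Q η) model
  obtain ⟨MT⟩ := Tsat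
  letI S2 : (L[[Q]].sum (constantsOn Q)).Structure MT := MT.struc
  letI S1 : L[[Q]].Structure MT := (LHom.sumInl : L[[Q]] →ᴸ L2).reduct MT
  letI LS : L.Structure MT := (L.lhomWithConstants Q).reduct MT
  haveI e1 : (L.lhomWithConstants Q).IsExpansionOn (MT : Type _) :=
    LHom.isExpansionOn_reduct (L.lhomWithConstants Q) MT
  haveI esum : (LHom.sumInl : L[[Q]] →ᴸ L2).IsExpansionOn (MT : Type _) :=
    LHom.isExpansionOn_reduct _ MT
  have hsub1 : ρ₁.onTheory (L.elementaryDiagram Q) ⊆ T := by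
    intro x hx; exact Or.inl (Or.inl hx)
  have hsub2 : ρ₂.onTheory (L.elementaryDiagram Q) ⊆ T := by
    intro x hx; exact Or.inl (Or.inr hx)
  have hsub3 : Set.range linkSent ⊆ T := by
    intro x hx; exact Or.inr hx
  haveI m1 : (MT : Type _) ⊨ L.elementaryDiagram Q :=
    ((LHom.sumInl : L[[Q]] →ᴸ L2).onTheory_model (L.elementaryDiagram Q)).1
      (MT.is_model.mono hsub1)
  let i : Q ↪ₑ[L] MT := ElementaryEmbedding.ofModelsElementaryDiagram L Q MT
  have e2' : @LHom.IsExpansionOn _ _ ρ₂ (MT : Type _) (ρ₂.reduct MT) _ :=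
    LHom.isExpansionOn_reduct ρ₂ MT
  have m2 : @Theory.Model _ (MT : Type _) (ρ₂.reduct MT) (L.elementaryDiagram Q) :=
    (@LHom.onTheory_model _ _ (MT : Type _) (ρ₂.reduct MT) _ ρ₂ e2'
      (L.elementaryDiagram Q)).1 (MT.is_model.mono hsub2)
  have ec2 : @LHom.IsExpansionOn _ _ (L.lhomWithConstants Q) (MT : Type _) LS (ρ₂.reduct MT) :=
    @LHom.IsExpansionOn.mk _ _ _ (MT : Type _) LS (ρ₂.reduct MT)
      (fun _ _ => rfl) (fun _ _ => rfl)
  let σ : Q ↪ₑ[L] MT :=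
    @ElementaryEmbedding.ofModelsElementaryDiagram L Q _ MT LS (ρ₂.reduct MT) ec2 m2
  refine ⟨MT, LS, i, σ, MT.nonempty', ?_⟩
  intro b
  have hmem : linkSent b ∈ T := hsub3 ⟨b, rfl⟩
  have hreal : (MT : Type _) ⊨ linkSent b := MT.is_model.realize_of_mem _ hmem
  have := Formula.realize_equal.1 hreal
  rw [Term.realize_constants, Term.realize_constants] at this
  exact this

end CEL


section Chain

variable {L : FirstOrder.Language.{u, v}}

/-- A stage of the back-and-forth construction: two structures, a chain map `j` and an
automorphism approximation `t`. -/
structure Stage (L : FirstOrder.Language.{u, v}) where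
  P : Type (max u v w)
  Q : Type (max u v w)
  sP : L.Structure P
  sQ : L.Structure Q
  nP : Nonempty P
  nQ : Nonempty Q
  j : @ElementaryEmbedding L P Q sP sQ
  t : @ElementaryEmbedding L P Q sP sQ

/-- Extend a stage by one step, using the step lemma. -/
noncomputable def stepPack (S : Stage.{u, v, w} L) :
    Σ' (R : Type (max u v w)) (sR : L.Structure R) (_ : Nonempty R)
      (i : @ElementaryEmbedding L S.Q R S.sQ sR) (t : @ElementaryEmbedding L S.Q R S.sQ sR),
      ∀ x : S.P, t (S.t x) = i (S.j x) :=
  Classical.choice (by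
    letI := S.sP; letI := S.sQ; haveI := S.nP; haveI := S.nQ
    have hel : ∀ (n : ℕ) (φ : L.Formula (Fin n)) (x : Fin n → (Set.range S.t : Set S.Q)),
        (φ.Realize fun i => ((x i : S.Q))) ↔
          (φ.Realize fun i => S.j (Classical.choose (x i).2)) := by
      intro n φ x
      have hspec : ∀ i, S.t (Classical.choose (x i).2) = (x i : S.Q) :=
        fun i => Classical.choose_spec (x i).2
      have h1 : (fun i => ((x i : S.Q))) = (⇑S.t) ∘ (fun i => Classical.choose (x i).2) := by
        funext i; exact (hspec i).symm
      have h2 : (fun i => S.j (Classical.choose (x i).2))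
          = (⇑S.j) ∘ (fun i => Classical.choose (x i).2) := rfl
      rw [h1, h2, S.t.map_formula, S.j.map_formula]
    obtain ⟨R, sR, i, σ, nR, hσ⟩ := step_lemma (L := L) S.Q (Set.range S.t)
      (fun b => S.j (Classical.choose b.2)) hel
    refine ⟨⟨R, sR, nR, i, σ, ?_⟩⟩
    intro x
    have hb := hσ ⟨S.t x, ⟨x, rfl⟩⟩
    have hcx : Classical.choose (⟨S.t x, ⟨x, rfl⟩⟩ : (Set.range S.t : Set S.Q)).2 = x :=
      S.t.injective (Classical.choose_spec (⟨S.t x, ⟨x, rfl⟩⟩ :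
        (Set.range S.t : Set S.Q)).2)
    rw [hb, hcx])

/-- The next stage. -/
noncomputable def step (S : Stage.{u, v, w} L) : Stage.{u, v, w} L :=
  ⟨S.Q, (stepPack S).1, S.sQ, (stepPack S).2.1, S.nQ, (stepPack S).2.2.1,
    (stepPack S).2.2.2.1, (stepPack S).2.2.2.2.1⟩

lemma step_glue (S : Stage.{u, v, w} L) (x : S.P) :
    (step S).t (S.t x) = (step S).j (S.j x) :=
  (stepPack S).2.2.2.2.2 x

/-- The elementary chain. -/
noncomputable def chainS (S0 : Stage.{u, v, w} L) : ℕ → Stage.{u, v, w} L :=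
  fun n => Nat.rec S0 (fun _ S => step S) n

lemma limit_lemma (S0 : Stage.{u, v, w} L) :
    ∃ (N' : Type (max u v w)) (iN : L.Structure N')
      (g0 : @ElementaryEmbedding L S0.P N' S0.sP iN) (τ : @Language.Equiv L N' N' iN iN),
      ∀ x y : S0.P, S0.t x = S0.j y → τ (g0 x) = g0 y := by
  classical
  let G : ℕ → Type (max u v w) := fun n => (chainS S0 n).P
  letI iG : ∀ n, L.Structure (G n) := fun n => (chainS S0 n).sP
  let J : ∀ n, G n ↪ₑ[L] G (n + 1) := fun n => (chainS S0 n).j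
  let H : ∀ n, G n ↪ₑ[L] G (n + 1) := fun n => (chainS S0 n).t
  have glue : ∀ (n : ℕ) (x : G n), H (n + 1) (H n x) = J (n + 1) (J n x) :=
    fun n x => step_glue (chainS S0 n) x
  let fE : ∀ m n, m ≤ n → (G m ↪ₑ[L] G n) := fun m n h =>
    Nat.leRecOn h (fun {k} g => (J k).comp g) (ElementaryEmbedding.refl L (G m))
  let f : ∀ m n, m ≤ n → (G m ↪[L] G n) := fun m n h => (fE m n h).toEmbedding
  have fE_self : ∀ m (h : m ≤ m) (x : G m), fE m m h x = x := by
    intro m h x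
    have e1 : fE m m h = ElementaryEmbedding.refl L (G m) := Nat.leRecOn_self _
    rw [e1]
    rfl
  have fE_succ : ∀ m n (h : m ≤ n) (h2 : m ≤ n + 1) (x : G m),
      fE m (n + 1) h2 x = J n (fE m n h x) := by
    intro m n h h2 x
    have e1 : fE m (n + 1) h2 = (J n).comp (fE m n h) :=
      Nat.leRecOn_succ (C := fun k => G m ↪ₑ[L] G k) h (ElementaryEmbedding.refl L (G m))
    rw [e1]
    rfl
  have fE_trans0 : ∀ m n (hmn : m ≤ n) (d : ℕ) (h : m ≤ n + d) (x : G m),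
      fE m (n + d) h x = fE n (n + d) (Nat.le_add_right n d) (fE m n hmn x) := by
    intro m n hmn d
    induction d with
    | zero =>
      intro h x
      exact (fE_self n (Nat.le_add_right n 0) ((fE m n hmn) x)).symm
    | succ d ih =>
      intro h x
      show fE m ((n + d) + 1) h x
        = fE n ((n + d) + 1) (Nat.le_add_right n (d + 1)) ((fE m n hmn) x)
      rw [fE_succ m (n + d) (by omega) h x,
        fE_succ n (n + d) (Nat.le_add_right n d) (Nat.le_add_right n (d + 1)) (fE m n hmn x),
        ih (by omega) x]
  have fE_trans : ∀ m n k (hmn : m ≤ n) (hnk : n ≤ k) (h : m ≤ k) (x : G m),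
      fE m k h x = fE n k hnk (fE m n hmn x) := by
    intro m n k hmn hnk h x
    obtain ⟨d, rfl⟩ := Nat.exists_eq_add_of_le hnk
    rw [fE_trans0 m n hmn d h x]
  haveI ds : DirectedSystem G (fun i j h => f i j h) := by
    refine ⟨fun i x => fE_self i le_rfl x, fun k j i hij hjk x => ?_⟩
    exact (fE_trans i j k hij hjk (le_trans hij hjk) x).symm
  let NL := Language.DirectLimit G f
  -- elementarity of the limit maps
  have realize_of : ∀ (k : ℕ) (φ : L.BoundedFormula Empty k) (n : ℕ) (v : Fin k → G n),
      φ.Realize ((DirectLimit.of L ℕ G f n) ∘ default) ((DirectLimit.of L ℕ G f n) ∘ v)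
        ↔ φ.Realize default v := by
    intro k φ
    induction φ with
    | falsum => intro n v; exact Iff.rfl
    | equal t₁ t₂ =>
      intro n v
      show Term.realize (Sum.elim ((DirectLimit.of L ℕ G f n) ∘ default)
            ((DirectLimit.of L ℕ G f n) ∘ v)) t₁
          = Term.realize (Sum.elim ((DirectLimit.of L ℕ G f n) ∘ default)
            ((DirectLimit.of L ℕ G f n) ∘ v)) t₂
          ↔ Term.realize (Sum.elim default v) t₁ = Term.realize (Sum.elim default v) t₂
      rw [← Sum.comp_elim, HomClass.realize_term, HomClass.realize_term]
      exact ⟨fun hh => (DirectLimit.of L ℕ G f n).injective hh, fun hh => congrArg _ hh⟩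
    | rel R ts =>
      intro n v
      have hterm : (fun i => Term.realize (Sum.elim ((DirectLimit.of L ℕ G f n) ∘ default)
            ((DirectLimit.of L ℕ G f n) ∘ v)) (ts i))
          = (DirectLimit.of L ℕ G f n) ∘ (fun i => Term.realize (Sum.elim default v) (ts i)) := by
        funext i
        rw [← Sum.comp_elim, HomClass.realize_term]
        rfl
      show RelMap R (fun i => Term.realize (Sum.elim ((DirectLimit.of L ℕ G f n) ∘ default)
            ((DirectLimit.of L ℕ G f n) ∘ v)) (ts i))
          ↔ RelMap R (fun i => Term.realize (Sum.elim default v) (ts i))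
      rw [hterm]
      exact (DirectLimit.of L ℕ G f n).map_rel R _
    | imp φ₁ φ₂ ih₁ ih₂ =>
      intro n v
      simp only [BoundedFormula.Realize]
      rw [ih₁ n v, ih₂ n v]
    | all φ' ih =>
      intro n v
      simp only [BoundedFormula.realize_all]
      constructor
      · intro hNL b
        have hb := hNL (DirectLimit.of L ℕ G f n b)
        rw [← Fin.comp_snoc] at hb
        exact (ih n (Fin.snoc v b)).1 hb
      · intro hG a
        obtain ⟨m, y, rfl⟩ := DirectLimit.exists_of a
        have hnk : n ≤ max n m := le_max_left n m
        have hmk : m ≤ max n m := le_max_right n m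
        have hy : DirectLimit.of L ℕ G f m y
            = DirectLimit.of L ℕ G f (max n m) (f m (max n m) hmk y) := DirectLimit.of_f.symm
        have hv : (DirectLimit.of L ℕ G f n) ∘ v
            = (DirectLimit.of L ℕ G f (max n m)) ∘ (⇑(f n (max n m) hnk) ∘ v) := by
          funext idx
          exact DirectLimit.of_f.symm
        have hd : (DirectLimit.of L ℕ G f n) ∘ (default : Empty → G n)
            = (DirectLimit.of L ℕ G f (max n m)) ∘ (default : Empty → G (max n m)) :=
          Subsingleton.elim _ _
        rw [hy, hv, hd, ← Fin.comp_snoc]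
        refine (ih (max n m) _).2 ?_
        have h0 : (BoundedFormula.all φ').Realize (default : Empty → G n) v :=
          BoundedFormula.realize_all.2 hG
        have hall := ((fE n (max n m) hnk).map_boundedFormula (BoundedFormula.all φ')
          default v).2 h0
        rw [Subsingleton.elim ((fE n (max n m) hnk) ∘ (default : Empty → G n))
          (default : Empty → G (max n m))] at hall
        exact BoundedFormula.realize_all.1 hall (f m (max n m) hmk y)
  let ofE : ∀ n, G n ↪ₑ[L] NL := fun n =>
    ⟨DirectLimit.of L ℕ G f n, fun {k} φ x => by
      have h1 := realize_of k (BoundedFormula.relabel Sum.inr φ) n x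
      exact (Formula.realize_relabel_sumInr φ).symm.trans
        (h1.trans (Formula.realize_relabel_sumInr φ))⟩
  -- the limit automorphism
  have le2 : ∀ i : ℕ, i ≤ 2 * i := fun i => by omega
  let τraw : (Σ i, G i) → NL := fun p =>
    DirectLimit.of L ℕ G f (2 * p.1 + 1) (H (2 * p.1) (fE p.1 (2 * p.1) (le2 p.1) p.2))
  have of_J : ∀ (k : ℕ) (z : G k),
      DirectLimit.of L ℕ G f (k + 1) (J k z) = DirectLimit.of L ℕ G f k z := by
    intro k z
    have h1 : f k (k + 1) (Nat.le_succ k) z = J k z := by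
      show fE k (k + 1) (Nat.le_succ k) z = J k z
      rw [fE_succ k k le_rfl (Nat.le_succ k) z, fE_self]
    rw [← h1, DirectLimit.of_f]
  have tau_shift0 : ∀ (n d : ℕ) (h : 2 * n ≤ 2 * (n + d)) (x : G (2 * n)),
      DirectLimit.of L ℕ G f (2 * n + 1) (H (2 * n) x)
        = DirectLimit.of L ℕ G f (2 * (n + d) + 1)
          (H (2 * (n + d)) (fE (2 * n) (2 * (n + d)) h x)) := by
    intro n d
    induction d with
    | zero =>
      intro h x
      exact congrArg (fun z => DirectLimit.of L ℕ G f (2 * n + 1) (H (2 * n) z))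
        (fE_self (2 * n) h x).symm
    | succ d ih =>
      intro h x
      show DirectLimit.of L ℕ G f (2 * n + 1) (H (2 * n) x)
        = DirectLimit.of L ℕ G f (2 * (n + d) + 1 + 1 + 1)
          (H (2 * (n + d) + 1 + 1) (fE (2 * n) (2 * (n + d) + 1 + 1) (by omega) x))
      rw [fE_succ (2 * n) (2 * (n + d) + 1) (by omega) (by omega) x,
        fE_succ (2 * n) (2 * (n + d)) (by omega) (by omega) x,
        ← glue (2 * (n + d)) (fE (2 * n) (2 * (n + d)) (by omega) x),
        glue (2 * (n + d) + 1) (H (2 * (n + d)) (fE (2 * n) (2 * (n + d)) (by omega) x)),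
        of_J, of_J]
      exact ih (by omega) x
  have tau_shift : ∀ (n k : ℕ) (hnk : n ≤ k) (h : 2 * n ≤ 2 * k) (x : G (2 * n)),
      DirectLimit.of L ℕ G f (2 * n + 1) (H (2 * n) x)
        = DirectLimit.of L ℕ G f (2 * k + 1) (H (2 * k) (fE (2 * n) (2 * k) h x)) := by
    intro n k hnk h x
    obtain ⟨d, rfl⟩ := Nat.exists_eq_add_of_le hnk
    exact tau_shift0 n d h x
  have resp : ∀ p q : (Σ i, G i), @Setoid.r _ (Language.DirectLimit.setoid G f) p q →
      τraw p = τraw q := by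
    rintro ⟨i, x⟩ ⟨j, y⟩ hpq
    have hfe : fE i (2 * max i j) (by omega) x = fE j (2 * max i j) (by omega) y := by
      have h2 := (DirectLimit.equiv_iff G f (x := ⟨i, x⟩) (y := ⟨j, y⟩)
        (i := 2 * max i j) (le_trans (le_max_left i j) (le2 _))
        (le_trans (le_max_right i j) (le2 _))).1 hpq
      exact h2
    show DirectLimit.of L ℕ G f (2 * i + 1) (H (2 * i) (fE i (2 * i) (le2 i) x))
      = DirectLimit.of L ℕ G f (2 * j + 1) (H (2 * j) (fE j (2 * j) (le2 j) y))
    rw [tau_shift i (max i j) (le_max_left i j) (by omega) (fE i (2 * i) (le2 i) x),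
      ← fE_trans i (2 * i) (2 * max i j) (le2 i) (by omega) (by omega) x,
      tau_shift j (max i j) (le_max_right i j) (by omega) (fE j (2 * j) (le2 j) y),
      ← fE_trans j (2 * j) (2 * max i j) (le2 j) (by omega) (by omega) y,
      hfe]
  let τfun : NL → NL := Quotient.lift τraw resp
  have τ_even : ∀ (p : ℕ) (x : G (2 * p)),
      τfun (DirectLimit.of L ℕ G f (2 * p) x)
        = DirectLimit.of L ℕ G f (2 * p + 1) (H (2 * p) x) := by
    intro p x
    have h1 : τfun (DirectLimit.of L ℕ G f (2 * p) x)
        = DirectLimit.of L ℕ G f (2 * (2 * p) + 1)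
          (H (2 * (2 * p)) (fE (2 * p) (2 * (2 * p)) (le2 (2 * p)) x)) := rfl
    rw [h1]
    exact (tau_shift p (2 * p) (le2 p) (by omega) x).symm
  have τ_formula : ∀ (k : ℕ) (φ : L.Formula (Fin k)) (x : Fin k → NL),
      φ.Realize (τfun ∘ x) ↔ φ.Realize x := by
    intro k φ x
    obtain ⟨n, y, hy⟩ := DirectLimit.exists_quotient_mk'_sigma_mk'_eq G f x
    have hx : x = (DirectLimit.of L ℕ G f n) ∘ y := hy
    have hx2 : x = (DirectLimit.of L ℕ G f (2 * n)) ∘ (⇑(f n (2 * n) (le2 n)) ∘ y) := by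
      rw [hx]
      funext idx
      exact DirectLimit.of_f.symm
    have hτx : τfun ∘ x = (DirectLimit.of L ℕ G f (2 * n + 1))
        ∘ (⇑(H (2 * n)) ∘ (⇑(f n (2 * n) (le2 n)) ∘ y)) := by
      rw [hx2]
      funext idx
      exact τ_even n _
    rw [hτx, hx2]
    have e1 := (ofE (2 * n + 1)).map_formula φ (⇑(H (2 * n)) ∘ (⇑(f n (2 * n) (le2 n)) ∘ y))
    have e2 := (H (2 * n)).map_formula φ (⇑(f n (2 * n) (le2 n)) ∘ y)
    have e3 := (ofE (2 * n)).map_formula φ (⇑(f n (2 * n) (le2 n)) ∘ y)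
    exact (e1.trans e2).trans e3.symm
  have τ_surj : Function.Surjective τfun := by
    intro z
    obtain ⟨n, y, rfl⟩ := DirectLimit.exists_of z
    set y' : G (2 * n + 1) := fE n (2 * n + 1) (by omega) y with hy'
    refine ⟨DirectLimit.of L ℕ G f (2 * n + 2) (H (2 * n + 1) y'), ?_⟩
    have he : τfun (DirectLimit.of L ℕ G f (2 * n + 2) (H (2 * n + 1) y'))
        = DirectLimit.of L ℕ G f (2 * n + 3) (H (2 * n + 2) (H (2 * n + 1) y')) :=
      τ_even (n + 1) (H (2 * n + 1) y')
    rw [he, glue (2 * n + 1) y', of_J, of_J]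
    exact DirectLimit.of_f
  let τ_emb : NL ↪ₑ[L] NL := ⟨τfun, fun {k} φ x => τ_formula k φ x⟩
  have τ_inj : Function.Injective τfun := τ_emb.injective
  let τ_equiv : @Language.Equiv L NL NL _ _ :=
    { toEquiv := Equiv.ofBijective τfun ⟨τ_inj, τ_surj⟩
      map_fun' := fun {k} F x => τ_emb.map_fun F x
      map_rel' := fun {k} r x => τ_emb.map_rel r x }
  refine ⟨NL, inferInstance, ofE 0, τ_equiv, ?_⟩
  intro x y hxy
  show τfun (DirectLimit.of L ℕ G f 0 x) = DirectLimit.of L ℕ G f 0 y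
  have h0 : τfun (DirectLimit.of L ℕ G f 0 x)
      = DirectLimit.of L ℕ G f 1 (H 0 x) := τ_even 0 x
  rw [h0]
  show DirectLimit.of L ℕ G f 1 (S0.t x) = DirectLimit.of L ℕ G f 0 y
  rw [hxy]
  exact of_J 0 y

end Chain

end Stmt9Aux

/-- Let `N` be an `L`-structure, `A ⊆ N`, and `f : A → N` a partial
elementary map: for every `L`-formula `φ(x₁,…,xₙ)` and all `a₁,…,aₙ ∈ A`,
`N ⊨ φ(a₁,…,aₙ)` iff `N ⊨ φ(f(a₁),…,f(aₙ))`.  Then there exist an elementary extension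
`N'` of `N` and an `L`-automorphism `τ` of `N'` with `τ(a) = f(a)` for every `a ∈ A`. -/
theorem stmt_9 (L : FirstOrder.Language.{u, v}) (N : Type w) (_ : L.Structure N)
    (A : Set N) (f : A → N)
    (helem : ∀ (n : ℕ) (φ : L.Formula (Fin n)) (x : Fin n → A),
      φ.Realize (fun i => (x i : N)) ↔ φ.Realize (fun i => f (x i))) :
    ∃ (N' : Type (max u v w)) (_ : L.Structure N') (g : N ↪ₑ[L] N') (τ : N' ≃[L] N'),
      ∀ a : A, τ (g a) = g (f a) := by
  classical
  rcases isEmpty_or_nonempty N with hN | hN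
  · -- degenerate case: `N` is empty
    letI iN0 : L.Structure (ULift.{max u v} N) :=
      Equiv.inducedStructure (L := L) (Equiv.ulift.symm : N ≃ ULift.{max u v} N)
    refine ⟨ULift.{max u v} N, iN0,
      (Equiv.inducedStructureEquiv (L := L)
        (Equiv.ulift.symm : N ≃ ULift.{max u v} N)).toElementaryEmbedding,
      Language.Equiv.refl L _, ?_⟩
    intro a
    exact (hN.false (a : N)).elim
  · -- main case
    letI iN0 : L.Structure (ULift.{max u v} N) :=
      Equiv.inducedStructure (L := L) (Equiv.ulift.symm : N ≃ ULift.{max u v} N)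
    let e : @Language.Equiv L N (ULift.{max u v} N) _ iN0 :=
      Equiv.inducedStructureEquiv (L := L) (Equiv.ulift.symm : N ≃ ULift.{max u v} N)
    let eE : N ↪ₑ[L] (ULift.{max u v} N) := e.toElementaryEmbedding
    haveI : Nonempty (ULift.{max u v} N) := ⟨⟨Classical.arbitrary N⟩⟩
    let B : Set (ULift.{max u v} N) := Set.range (fun a : A => e (a : N))
    let h : B → (ULift.{max u v} N) := fun b => e (f (Classical.choose b.2))
    have hel : ∀ (n : ℕ) (φ : L.Formula (Fin n)) (x : Fin n → B),
        (φ.Realize fun i => ((x i : ULift.{max u v} N))) ↔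
          (φ.Realize fun i => h (x i)) := by
      intro n φ x
      have hspec : ∀ i, e ((Classical.choose (x i).2 : A) : N) = (x i : ULift.{max u v} N) :=
        fun i => Classical.choose_spec (x i).2
      have h1 : (fun i => ((x i : ULift.{max u v} N)))
          = (⇑eE) ∘ (fun i => ((Classical.choose (x i).2 : A) : N)) := by
        funext i
        exact (hspec i).symm
      have h2 : (fun i => h (x i))
          = (⇑eE) ∘ (fun i => f (Classical.choose (x i).2)) := rfl
      rw [h1, h2, eE.map_formula, eE.map_formula]
      exact helem n φ (fun i => Classical.choose (x i).2)
    obtain ⟨R1, sR1, i1, σ1, nR1, hσ1⟩ :=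
      Stmt9Aux.step_lemma (L := L) (ULift.{max u v} N) B h hel
    let S0 : Stmt9Aux.Stage.{u, v, w} L :=
      ⟨ULift.{max u v} N, R1, iN0, sR1, ‹_›, nR1, i1, σ1⟩
    obtain ⟨N', iN', g0, τ, hτ⟩ := Stmt9Aux.limit_lemma S0
    refine ⟨N', iN', g0.comp eE, τ, ?_⟩
    intro a
    show τ (g0 (eE (a : N))) = g0 (eE (f a))
    refine hτ (eE (a : N)) (eE (f a)) ?_
    show σ1 (e (a : N)) = i1 (e (f a))
    have hb := hσ1 ⟨e (a : N), ⟨a, rfl⟩⟩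
    have hc : Classical.choose (⟨e (a : N), ⟨a, rfl⟩⟩ : B).2 = a := by
      have hs := Classical.choose_spec (⟨e (a : N), ⟨a, rfl⟩⟩ : B).2
      have : ((Classical.choose (⟨e (a : N), ⟨a, rfl⟩⟩ : B).2 : A) : N) = (a : N) :=
        e.injective hs
      exact Subtype.ext this
    rw [hb]
    show i1 (e (f (Classical.choose (⟨e (a : N), ⟨a, rfl⟩⟩ : B).2))) = i1 (e (f a))
    rw [hc]
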